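/- arXiv:2311.06849 — 2 statements merged into one kernel-verified Lean document; each statement's English description precedes it below -/
import Mathlib

section
/- Let V : ℂ → ℂ be entire and suppose |V(z)| ≤ (C·γ^j/(j−1)!)·(q + |z|)^(2(j−1))·e^{−Re(κ·z)} for all z ∈ ℂ, where C, γ > 0, κ > 0 real, q ≥ 0, j ≥ 1. Then for every n ≥ 1 and all z ∈ ℂ, |V^(n)(z)| ≤ C·(κ^n·n!·e^(n+1)/(n+1)^n)·(γ^j/(j−1)!)·e^{−Re(κ·z)}·(q + (n+1)/κ + |z|)^(2(j−1)). -/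
open Complex Real Nat

theorem stmt_5 (V : ℂ → ℂ) (hV : Differentiable ℂ V)
    (C γ q κ : ℝ) (hC : 0 < C) (hγ : 0 < γ) (hq : 0 ≤ q) (hκ : 0 < κ)
    (j : ℕ) (hj : 1 ≤ j)
    (hbound : ∀ z : ℂ, ‖V z‖ ≤
      C * γ ^ j / (j - 1).factorial * (q + ‖z‖) ^ (2 * (j - 1)) *
        Real.exp (-(κ * z.re)))
    (n : ℕ) (hn : 1 ≤ n) :
    ∀ z : ℂ, ‖iteratedDeriv n V z‖ ≤
      C * (κ ^ n * n.factorial * Real.exp 1 ^ (n + 1) / (n + 1 : ℝ) ^ n) *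
        (γ ^ j / (j - 1).factorial) * Real.exp (-(κ * z.re)) *
        (q + (n + 1) / κ + ‖z‖) ^ (2 * (j - 1)) := by
  intro z
  set R : ℝ := (n + 1) / κ with hR
  have hRpos : 0 < R := by positivity
  set M : ℝ := C * γ ^ j / (j - 1).factorial * (q + R + ‖z‖) ^ (2 * (j - 1)) *
      (Real.exp 1 ^ (n + 1) * Real.exp (-(κ * z.re))) with hM
  have hMnn : 0 ≤ M := by positivity
  -- bound V on the sphere
  have hsph : ∀ θ : ℝ, ‖V (circleMap z R θ)‖ ≤ M := by
    intro θ
    have h1 := hbound (circleMap z R θ)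
    refine h1.trans ?_
    have hsplit : (circleMap z R θ).re = z.re + (circleMap 0 R θ).re := by
      simp [circleMap]
    have habs : ‖circleMap z R θ‖ ≤ ‖z‖ + R := by
      have h := norm_add_le z (circleMap 0 R θ)
      have h0 : ‖circleMap 0 R θ‖ = R := by
        rw [norm_circleMap_zero, abs_of_pos hRpos]
      have he : circleMap z R θ = z + circleMap 0 R θ := by simp [circleMap]
      rw [he]; rw [h0] at h; exact h
    have hre : z.re - R ≤ (circleMap z R θ).re := by
      have h1 : |(circleMap 0 R θ).re| ≤ ‖circleMap 0 R θ‖ := Complex.abs_re_le_norm _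
      rw [norm_circleMap_zero, abs_of_pos hRpos] at h1
      have := (abs_le.1 h1).1
      rw [hsplit]; linarith
    have hexp : Real.exp (-(κ * (circleMap z R θ).re)) ≤
        Real.exp 1 ^ (n + 1) * Real.exp (-(κ * z.re)) := by
      rw [← Real.exp_nat_mul, ← Real.exp_add]
      apply Real.exp_le_exp.2
      have hκR : κ * R = n + 1 := by rw [hR]; field_simp
      push_cast
      nlinarith [hκ.le, hre]
    have hpow : (q + ‖circleMap z R θ‖) ^ (2 * (j - 1)) ≤
        (q + R + ‖z‖) ^ (2 * (j - 1)) := by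
      apply pow_le_pow_left₀ (by positivity)
      linarith
    rw [hM]
    have hc : 0 ≤ C * γ ^ j / (j - 1).factorial := by positivity
    exact mul_le_mul (mul_le_mul le_rfl hpow (by positivity) hc) hexp (by positivity)
      (by positivity)
  -- power series
  set R' : NNReal := ⟨R, hRpos.le⟩ with hR'def
  have hR' : (R' : ℝ) = R := rfl
  have hps : HasFPowerSeriesOnBall V (cauchyPowerSeries V z R') z R' :=
    (hV.differentiableOn).hasFPowerSeriesOnBall (by exact_mod_cast hRpos)
  -- iterated deriv
  have hiter : ‖iteratedDeriv n V z‖ ≤ n ! * ‖cauchyPowerSeries V z R' n‖ := by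
    have h1 : (n ! : ℕ) • (cauchyPowerSeries V z R' n fun _ ↦ (1:ℂ)) =
        iteratedFDeriv ℂ n V z (fun _ ↦ 1) := hps.factorial_smul 1 n
    have h2 : iteratedDeriv n V z = iteratedFDeriv ℂ n V z (fun _ ↦ 1) :=
      iteratedDeriv_eq_iteratedFDeriv ..
    rw [h2, ← h1]
    rw [nsmul_eq_mul]
    rw [norm_mul]
    simp only [Complex.norm_natCast]
    gcongr
    calc ‖cauchyPowerSeries V z R' n fun _ ↦ (1:ℂ)‖
        ≤ ‖cauchyPowerSeries V z R' n‖ * ∏ _i : Fin n, ‖(1:ℂ)‖ :=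
          (cauchyPowerSeries V z R' n).le_opNorm _
      _ = ‖cauchyPowerSeries V z R' n‖ := by simp
  have hnorm : ‖cauchyPowerSeries V z R' n‖ ≤ M * |(R':ℝ)|⁻¹ ^ n := by
    refine (norm_cauchyPowerSeries_le V z R' n).trans ?_
    have hintle : ∫ θ : ℝ in (0:ℝ)..2 * π, ‖V (circleMap z R' θ)‖ ≤
        ∫ θ : ℝ in (0:ℝ)..2 * π, M := by
      refine intervalIntegral.integral_mono_on Real.two_pi_pos.le ?_ (by simp) ?_
      · apply Continuous.intervalIntegrable
        exact hV.continuous.norm.comp (continuous_circleMap z R')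
      · intro θ _; exact hsph θ
    have hconst : ∫ θ : ℝ in (0:ℝ)..2 * π, M = 2 * π * M := by
      rw [intervalIntegral.integral_const, smul_eq_mul]; ring
    have key : (2 * π)⁻¹ * ∫ θ : ℝ in (0:ℝ)..2 * π, ‖V (circleMap z R' θ)‖ ≤ M := by
      calc (2 * π)⁻¹ * ∫ θ : ℝ in (0:ℝ)..2 * π, ‖V (circleMap z R' θ)‖
          ≤ (2 * π)⁻¹ * (2 * π * M) := by
            rw [← hconst]
            exact mul_le_mul_of_nonneg_left hintle (by positivity)
        _ = M := by field_simp
    gcongr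
  have final : ‖iteratedDeriv n V z‖ ≤ n ! * (M * |(R':ℝ)|⁻¹ ^ n) :=
    hiter.trans (by gcongr)
  refine final.trans_eq ?_
  rw [hR', abs_of_pos hRpos, hM]
  rw [show (R:ℝ)⁻¹ = κ / (n+1) by rw [hR]; field_simp, div_pow]
  field_simp
end

section
/- For all real a > 0 and ξ with ξ > max{a−1, 0}, the upper incomplete Gamma function satisfies Γ(a, ξ) ≤ e^{−ξ}·ξ^a/(ξ − a₀), where a₀ = max{a−1, 0}. -/
open Real MeasureTheory Set

lemma exp_int (A : ℝ) {b : ℝ} (hb : 0 < b) :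
    ∫ x in Set.Ioi A, Real.exp (-(b * x)) = Real.exp (-(b * A)) / b := by
  have := integral_comp_mul_left_Ioi (fun y => Real.exp (-y)) A hb
  simp only [smul_eq_mul] at this
  rw [this, integral_exp_neg_Ioi]
  ring

theorem stmt_7 (a ξ : ℝ) (ha : 0 < a) (hξ : max (a - 1) 0 < ξ) :
    ∫ t in Set.Ioi ξ, t ^ (a - 1) * Real.exp (-t) ≤
      Real.exp (-ξ) * ξ ^ a / (ξ - max (a - 1) 0) := by
  set a₀ := max (a - 1) 0 with ha₀
  have hξ0 : 0 < ξ := lt_of_le_of_lt (le_max_right _ _) hξ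
  set c : ℝ := 1 - a₀ / ξ with hc_def
  have hc : 0 < c := by
    have h1 : a₀ / ξ < 1 := (div_lt_one hξ0).mpr hξ
    rw [hc_def]; linarith
  -- pointwise bound
  have hpt : ∀ t ∈ Set.Ioi ξ, t ^ (a - 1) * Real.exp (-t)
      ≤ ξ ^ (a - 1) * Real.exp (-a₀) * Real.exp (-(c * t)) := by
    intro t ht
    have htξ : ξ ≤ t := le_of_lt ht
    have ht0 : 0 < t := lt_of_lt_of_le hξ0 htξ
    have key : t ^ (a - 1) ≤ ξ ^ (a - 1) * Real.exp (a₀ / ξ * (t - ξ)) := by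
      rcases le_or_gt a 1 with h1 | h1
      · have ha₀0 : a₀ = 0 := max_eq_right (by linarith)
        rw [ha₀0]
        simp only [zero_div, zero_mul, Real.exp_zero, mul_one]
        calc t ^ (a - 1) = (t⁻¹) ^ (1 - a) := by
              rw [Real.inv_rpow ht0.le, ← Real.rpow_neg ht0.le, neg_sub]
          _ ≤ (ξ⁻¹) ^ (1 - a) := by
              apply Real.rpow_le_rpow (by positivity)
                (inv_anti₀ hξ0 htξ) (by linarith)
          _ = ξ ^ (a - 1) := by
              rw [Real.inv_rpow hξ0.le, ← Real.rpow_neg hξ0.le, neg_sub]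
      · have ha₀ : a₀ = a - 1 := max_eq_left (by linarith)
        have hlog : Real.log (t / ξ) ≤ t / ξ - 1 :=
          Real.log_le_sub_one_of_pos (by positivity)
        have : t ^ (a - 1) = ξ ^ (a - 1) * (t / ξ) ^ (a - 1) := by
          rw [← Real.mul_rpow hξ0.le (by positivity), mul_div_cancel₀ _ hξ0.ne']
        rw [this]
        apply mul_le_mul_of_nonneg_left _ (by positivity)
        rw [← Real.exp_log (x := (t/ξ) ^ (a-1)) (by positivity), Real.exp_le_exp,
          Real.log_rpow (by positivity)]
        have : a₀ / ξ * (t - ξ) = (a - 1) * (t / ξ - 1) := by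
          rw [ha₀]; field_simp; try ring
        rw [this]
        exact mul_le_mul_of_nonneg_left hlog (by linarith)
    calc t ^ (a - 1) * Real.exp (-t)
        ≤ ξ ^ (a - 1) * Real.exp (a₀ / ξ * (t - ξ)) * Real.exp (-t) := by
          apply mul_le_mul_of_nonneg_right key (Real.exp_pos _).le
      _ = ξ ^ (a - 1) * Real.exp (-a₀) * Real.exp (-(c * t)) := by
          rw [mul_assoc, mul_assoc, ← Real.exp_add, ← Real.exp_add]
          congr 2
          rw [hc_def]
          field_simp
          ring
  -- integrability of both sides
  have hint_rhs : IntegrableOn (fun t => ξ ^ (a - 1) * Real.exp (-a₀) * Real.exp (-(c * t)))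
      (Set.Ioi ξ) := by
    apply Integrable.const_mul
    exact (by simpa [neg_mul] using exp_neg_integrableOn_Ioi ξ hc :
      IntegrableOn (fun x => Real.exp (-(c * x))) (Set.Ioi ξ))
  have hint_lhs : IntegrableOn (fun t : ℝ => t ^ (a - 1) * Real.exp (-t)) (Set.Ioi ξ) := by
    have := (Real.GammaIntegral_convergent ha).mono_set (Set.Ioi_subset_Ioi hξ0.le)
    exact this.congr_fun (fun x _ => mul_comm _ _) measurableSet_Ioi
  have hmono := setIntegral_mono_on hint_lhs hint_rhs measurableSet_Ioi hpt
  refine hmono.trans ?_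
  rw [integral_const_mul, exp_int ξ hc]
  have hden : 0 < ξ - a₀ := by linarith
  rw [le_div_iff₀ hden]
  have hcξ : c * ξ = ξ - a₀ := by rw [hc_def]; field_simp
  have hexp : Real.exp (-a₀) * Real.exp (-(c * ξ)) = Real.exp (-ξ) := by
    rw [← Real.exp_add, hcξ]; ring_nf
  have hpow : ξ ^ (a - 1) * ξ = ξ ^ a := by
    rw [← Real.rpow_add_one hξ0.ne' (a-1)]; ring_nf
  calc ξ ^ (a - 1) * Real.exp (-a₀) * (Real.exp (-(c * ξ)) / c) * (ξ - a₀)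
      = ξ ^ (a - 1) * (Real.exp (-a₀) * Real.exp (-(c * ξ))) * ((ξ - a₀) / c) := by ring
    _ = ξ ^ (a - 1) * Real.exp (-ξ) * ξ := by
        rw [hexp, ← hcξ, mul_comm c ξ, mul_div_assoc, div_self hc.ne', mul_one]
    _ = Real.exp (-ξ) * ξ ^ a := by rw [mul_right_comm, hpow]; ring
    _ ≤ Real.exp (-ξ) * ξ ^ a := le_rfl
end
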